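/- arXiv:0705.0291 — 4 statements merged into one kernel-verified Lean document; each statement's English description precedes it below -/
import Mathlib

section
/- With the interval recursion a^{(j+1)} = a^{(j)} + ((σ(j+1)-1)/2)(b^{(j)}-a^{(j)}), b^{(j+1)} = b^{(j)} + ((σ(j+1)+1)/2)(b^{(j)}-a^{(j)}), b^{(0)}-a^{(0)}=2: the sequence (a^{(j)}) is bounded below if and only if σ(j) = -1 for only finitely many j, and (b^{(j)}) is bounded above if and only if σ(j) = 1 for only finitely many j. -/
lemma aux_bdd (σ : ℕ → ℤ) (a : ℕ → ℝ)
    (ha : ∀ j, a (j + 1) = if σ (j + 1) = -1 then a j - 2 ^ (j + 1) else a j) :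
    BddBelow (Set.range a) ↔ {j : ℕ | σ j = -1}.Finite := by
  have hanti : Antitone a := antitone_nat_of_succ_le (fun n => by
    rw [ha n]
    split
    · have : (0:ℝ) < 2 ^ (n + 1) := by positivity
      linarith
    · exact le_refl _)
  constructor
  · intro hbdd
    by_contra hinf
    have hinf' : {j : ℕ | σ j = -1}.Infinite := hinf
    have key : ∀ k : ℕ, ∃ j, a j ≤ a 0 - 2 * k := by
      intro k
      induction k with
      | zero => exact ⟨0, by simp⟩
      | succ k ih =>
        obtain ⟨j, hj⟩ := ih
        obtain ⟨m, hm, hmj⟩ := hinf'.exists_gt j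
        obtain ⟨m', rfl⟩ := Nat.exists_eq_succ_of_ne_zero (by omega : m ≠ 0)
        refine ⟨m' + 1, ?_⟩
        have h1 : a (m' + 1) = a m' - 2 ^ (m' + 1) := by
          rw [ha m', if_pos (show σ (m' + 1) = -1 from hm)]
        have h2 : a m' ≤ a j := hanti (by omega)
        have h3 : (2:ℝ) ≤ 2 ^ (m' + 1) := by
          calc (2:ℝ) = 2 ^ 1 := (pow_one 2).symm
          _ ≤ 2 ^ (m' + 1) := pow_le_pow_right₀ one_le_two (by omega)
        push_cast
        linarith
    obtain ⟨C, hC⟩ := hbdd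
    obtain ⟨k, hk⟩ := exists_nat_gt ((a 0 - C) / 2)
    obtain ⟨j, hj⟩ := key k
    have hCj : C ≤ a j := hC (Set.mem_range_self j)
    linarith
  · intro hfin
    obtain ⟨N, hN⟩ := hfin.bddAbove
    have hconst : ∀ j, N ≤ j → a j = a N := by
      intro j hj
      induction j, hj using Nat.le_induction with
      | base => rfl
      | succ n hn ih =>
        rw [ha n, if_neg, ih]
        intro hcon
        have := hN hcon
        omega
    refine ⟨a N, ?_⟩
    rintro x ⟨j, rfl⟩
    rcases le_or_gt j N with h | h
    · exact hanti h
    · rw [hconst j h.le]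

theorem interval_recursion_bounded_iff (σ : ℕ → ℤ) (a b : ℕ → ℝ)
    (hσ : ∀ j, σ j = -1 ∨ σ j = 1)
    (h0 : b 0 - a 0 = 2)
    (ha : ∀ j, a (j + 1) = a j + (((σ (j + 1) : ℝ) - 1) / 2) * (b j - a j))
    (hb : ∀ j, b (j + 1) = b j + (((σ (j + 1) : ℝ) + 1) / 2) * (b j - a j)) :
    (BddBelow (Set.range a) ↔ {j : ℕ | σ j = -1}.Finite) ∧
    (BddAbove (Set.range b) ↔ {j : ℕ | σ j = 1}.Finite) := by
  have hd : ∀ j, b j - a j = 2 ^ (j + 1) := by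
    intro j
    induction j with
    | zero => rw [pow_one]; exact h0
    | succ n ih =>
      have hstep : b (n + 1) - a (n + 1) = 2 * (b n - a n) := by
        rw [ha n, hb n]; ring
      rw [hstep, ih, pow_succ]; ring
  have ha' : ∀ j, a (j + 1) = if σ (j + 1) = -1 then a j - 2 ^ (j + 1) else a j := by
    intro j
    rw [ha j, hd j]
    split
    · next h => rw [h]; push_cast; ring
    · next h =>
      have h1 : σ (j + 1) = 1 := (hσ (j + 1)).resolve_left h
      rw [h1]; norm_num
  have hb' : ∀ j, (fun j => -b j) (j + 1) =
      if (fun j => -σ j) (j + 1) = -1 then (fun j => -b j) j - 2 ^ (j + 1)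
      else (fun j => -b j) j := by
    intro j
    simp only
    rw [hb j, hd j]
    rcases hσ (j + 1) with h | h
    · rw [h, if_neg (by simp [h])]; push_cast; ring
    · rw [h, if_pos (by simp [h])]; push_cast; ring
  constructor
  · exact aux_bdd σ a ha'
  · have := aux_bdd (fun j => -σ j) (fun j => -b j) hb'
    have hset : {j : ℕ | (fun j => -σ j) j = -1} = {j : ℕ | σ j = 1} := by
      ext j; simp only [Set.mem_setOf_eq]; omega
    rw [hset] at this
    rw [← this]
    constructor
    · rintro ⟨C, hC⟩
      exact ⟨-C, by rintro x ⟨j, rfl⟩; exact neg_le_neg (hC ⟨j, rfl⟩)⟩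
    · rintro ⟨C, hC⟩
      refine ⟨-C, ?_⟩
      rintro x ⟨j, rfl⟩
      have := hC (⟨j, rfl⟩ : -b j ∈ Set.range fun j => -b j)
      linarith
end

section
/- With the interval recursion as above, the union ⋃_j [a^{(j)}, b^{(j)}] is one of the following: all of ℝ, a half-line [a, ∞), a half-line (-∞, b], and it is never a bounded set. -/
theorem interval_recursion_union (σ : ℕ → ℤ) (a b : ℕ → ℝ)
    (hσ : ∀ j, σ j = -1 ∨ σ j = 1)
    (h0 : b 0 - a 0 = 2)
    (ha : ∀ j, a (j + 1) = a j + (((σ (j + 1) : ℝ) - 1) / 2) * (b j - a j))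
    (hb : ∀ j, b (j + 1) = b j + (((σ (j + 1) : ℝ) + 1) / 2) * (b j - a j)) :
    ((⋃ j, Set.Icc (a j) (b j)) = Set.univ ∨
     (∃ x : ℝ, (⋃ j, Set.Icc (a j) (b j)) = Set.Ici x) ∨
     (∃ x : ℝ, (⋃ j, Set.Icc (a j) (b j)) = Set.Iic x)) ∧
    ¬ Bornology.IsBounded (⋃ j, Set.Icc (a j) (b j)) := by
  have hd : ∀ j, b j - a j = 2 ^ (j + 1) := by
    intro j
    induction j with
    | zero => simpa using h0
    | succ n ih =>
      have h2 : b (n + 1) - a (n + 1) = 2 * (b n - a n) := by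
        rw [hb n, ha n]; ring
      rw [h2, ih]; ring
  have hpos : ∀ j : ℕ, (0:ℝ) < 2 ^ (j + 1) := fun j => pow_pos two_pos _
  have h2le : ∀ j : ℕ, (2:ℝ) ≤ 2 ^ (j + 1) := by
    intro j
    calc (2:ℝ) = 2 ^ 1 := (pow_one 2).symm
    _ ≤ 2 ^ (j + 1) := by
        apply pow_le_pow_right₀ one_le_two
        omega
  have hstepm : ∀ j, σ (j+1) = -1 → a (j+1) = a j - 2 ^ (j+1) ∧ b (j+1) = b j := by
    intro j h
    constructor
    · rw [ha j, h, hd j]; push_cast; ring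
    · rw [hb j, h]; push_cast; ring
  have hstepp : ∀ j, σ (j+1) = 1 → a (j+1) = a j ∧ b (j+1) = b j + 2 ^ (j+1) := by
    intro j h
    constructor
    · rw [ha j, h]; push_cast; ring
    · rw [hb j, h, hd j]; push_cast; ring
  have hA : Antitone a := by
    apply antitone_nat_of_succ_le
    intro n
    rcases hσ (n+1) with h | h
    · rw [(hstepm n h).1]
      have := hpos n; linarith
    · exact le_of_eq (hstepp n h).1
  have hB : Monotone b := by
    apply monotone_nat_of_le_succ
    intro n
    rcases hσ (n+1) with h | h
    · exact ge_of_eq (hstepm n h).2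
    · rw [(hstepp n h).2]
      have := hpos n; linarith
  -- unboundedness of the union (in all cases)
  have hnb : ¬ Bornology.IsBounded (⋃ j, Set.Icc (a j) (b j)) := by
    intro hbd
    obtain ⟨C, hC⟩ := Metric.isBounded_iff.mp hbd
    obtain ⟨m, hm⟩ := pow_unbounded_of_one_lt C (one_lt_two (α := ℝ))
    have hle : ∀ j, a j ≤ b j := fun j => by
      have := hpos j; have := hd j; linarith
    have hma : a m ∈ ⋃ j, Set.Icc (a j) (b j) :=
      Set.mem_iUnion.mpr ⟨m, le_rfl, hle m⟩
    have hmb : b m ∈ ⋃ j, Set.Icc (a j) (b j) :=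
      Set.mem_iUnion.mpr ⟨m, hle m, le_rfl⟩
    have hdist := hC hma hmb
    rw [Real.dist_eq, abs_sub_comm, abs_of_nonneg (by linarith [hle m]), hd m] at hdist
    have h2 : (2:ℝ) ^ m ≤ 2 ^ (m+1) := pow_le_pow_right₀ one_le_two (Nat.le_succ m)
    linarith
  refine ⟨?_, hnb⟩
  by_cases hP : ∃ N, ∀ j, N ≤ j → σ (j+1) = 1
  · -- eventually +1 : union is [a N, ∞)
    obtain ⟨N, hN⟩ := hP
    have hconst : ∀ j, N ≤ j → a j = a N := by
      intro j hj
      induction j, hj using Nat.le_induction with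
      | base => rfl
      | succ n hn ih => rw [(hstepp n (hN n hn)).1, ih]
    right; left
    refine ⟨a N, Set.Subset.antisymm ?_ ?_⟩
    · intro x hx
      obtain ⟨j, hj⟩ := Set.mem_iUnion.mp hx
      have haN : a N ≤ a j := by
        rcases le_total j N with h | h
        · exact hA h
        · exact (hconst j h).ge
      exact le_trans haN hj.1
    · intro x hx
      obtain ⟨m, hm⟩ := pow_unbounded_of_one_lt (x - a N) (one_lt_two (α := ℝ))
      refine Set.mem_iUnion.mpr ⟨max N m, ?_, ?_⟩
      · rw [hconst (max N m) (le_max_left _ _)]; exact hx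
      · have haj : a (max N m) = a N := hconst _ (le_max_left _ _)
        have hbj : b (max N m) = a N + 2 ^ (max N m + 1) := by
          have := hd (max N m); rw [haj] at this; linarith
        have h2 : (2:ℝ) ^ m ≤ 2 ^ (max N m + 1) :=
          pow_le_pow_right₀ one_le_two (Nat.le_succ_of_le (le_max_right N m))
        rw [hbj]; linarith [hx]
  by_cases hQ : ∃ N, ∀ j, N ≤ j → σ (j+1) = -1
  · -- eventually -1 : union is (-∞, b N]
    obtain ⟨N, hN⟩ := hQ
    have hconst : ∀ j, N ≤ j → b j = b N := by
      intro j hj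
      induction j, hj using Nat.le_induction with
      | base => rfl
      | succ n hn ih => rw [(hstepm n (hN n hn)).2, ih]
    right; right
    refine ⟨b N, Set.Subset.antisymm ?_ ?_⟩
    · intro x hx
      obtain ⟨j, hj⟩ := Set.mem_iUnion.mp hx
      have hbN : b j ≤ b N := by
        rcases le_total j N with h | h
        · exact hB h
        · exact (hconst j h).le
      exact le_trans hj.2 hbN
    · intro x hx
      obtain ⟨m, hm⟩ := pow_unbounded_of_one_lt (b N - x) (one_lt_two (α := ℝ))
      refine Set.mem_iUnion.mpr ⟨max N m, ?_, ?_⟩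
      · have hbj : b (max N m) = b N := hconst _ (le_max_left _ _)
        have haj : a (max N m) = b N - 2 ^ (max N m + 1) := by
          have := hd (max N m); rw [hbj] at this; linarith
        have h2 : (2:ℝ) ^ m ≤ 2 ^ (max N m + 1) :=
          pow_le_pow_right₀ one_le_two (Nat.le_succ_of_le (le_max_right N m))
        rw [haj]; linarith [hx]
      · rw [hconst (max N m) (le_max_left _ _)]; exact hx
  · -- both signs occur infinitely often : union is ℝ
    push_neg at hP hQ
    have hPm : ∀ N, ∃ j, N ≤ j ∧ σ (j+1) = -1 := by
      intro N
      obtain ⟨j, hj, hne⟩ := hP N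
      refine ⟨j, hj, ?_⟩
      rcases hσ (j+1) with h | h
      · exact h
      · exact absurd h hne
    have hQp : ∀ N, ∃ j, N ≤ j ∧ σ (j+1) = 1 := by
      intro N
      obtain ⟨j, hj, hne⟩ := hQ N
      refine ⟨j, hj, ?_⟩
      rcases hσ (j+1) with h | h
      · exact absurd h hne
      · exact h
    have hlow : ∀ M : ℝ, ∃ j, a j ≤ M := by
      intro M
      have key : ∀ n : ℕ, ∃ j, a j ≤ a 0 - 2 * n := by
        intro n
        induction n with
        | zero => exact ⟨0, by simp⟩
        | succ m ih =>
          obtain ⟨j, hj⟩ := ih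
          obtain ⟨k, hk, hks⟩ := hPm j
          refine ⟨k + 1, ?_⟩
          have hak : a k ≤ a j := hA hk
          have h2 := h2le k
          rw [(hstepm k hks).1]
          push_cast
          linarith
      obtain ⟨n, hn⟩ := exists_nat_ge ((a 0 - M) / 2)
      obtain ⟨j, hj⟩ := key n
      exact ⟨j, by linarith⟩
    have hhigh : ∀ M : ℝ, ∃ j, M ≤ b j := by
      intro M
      have key : ∀ n : ℕ, ∃ j, b 0 + 2 * n ≤ b j := by
        intro n
        induction n with
        | zero => exact ⟨0, by simp⟩
        | succ m ih =>
          obtain ⟨j, hj⟩ := ih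
          obtain ⟨k, hk, hks⟩ := hQp j
          refine ⟨k + 1, ?_⟩
          have hbk : b j ≤ b k := hB hk
          have h2 := h2le k
          rw [(hstepp k hks).2]
          push_cast
          linarith
      obtain ⟨n, hn⟩ := exists_nat_ge ((M - b 0) / 2)
      obtain ⟨j, hj⟩ := key n
      exact ⟨j, by linarith⟩
    left
    apply Set.eq_univ_of_forall
    intro x
    obtain ⟨j, hj⟩ := hlow x
    obtain ⟨k, hk⟩ := hhigh x
    refine Set.mem_iUnion.mpr ⟨max j k, ?_, ?_⟩
    · exact le_trans (hA (le_max_left j k)) hj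
    · exact le_trans hk (hB (le_max_right j k))
end

section
/- In dimension d, the pool structure of a Böröczky tiling is determined coordinatewise: given σ : ℕ → {-1,1}^d, let k be the number of coordinates i ∈ {1,…,d} in which σ_i is eventually constant. Then the union of the d-dimensional boxes defined by applying the interval recursion in each coordinate is congruent (up to translation and reflection of coordinates) to ℝ^{d-k} × [0,∞)^k, and the number of 'pools' obtained by reflecting in the k bounding hyperplanes is 2^k. -/
section aux
variable (σ : ℕ → ℤ) (a b : ℕ → ℝ)

theorem pool_len (h0 : b 0 - a 0 = 2)
    (ha : ∀ j, a (j+1) = a j + (((σ (j+1) : ℝ) - 1)/2) * (b j - a j))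
    (hb : ∀ j, b (j+1) = b j + (((σ (j+1) : ℝ) + 1)/2) * (b j - a j)) :
    ∀ j, b j - a j = 2 ^ (j+1) := by
  intro j
  induction j with
  | zero => simpa using h0
  | succ n ih =>
    have h2 : b (n+1) - a (n+1) = 2 * (b n - a n) := by rw [ha, hb]; ring
    rw [h2, ih]; ring

theorem pool_anti (hσ : ∀ j, σ j = -1 ∨ σ j = 1) (h0 : b 0 - a 0 = 2)
    (ha : ∀ j, a (j+1) = a j + (((σ (j+1) : ℝ) - 1)/2) * (b j - a j))
    (hb : ∀ j, b (j+1) = b j + (((σ (j+1) : ℝ) + 1)/2) * (b j - a j)) :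
    Antitone a := by
  have hgap : ∀ j, (0:ℝ) < b j - a j := by
    intro j; rw [pool_len σ a b h0 ha hb]; positivity
  apply antitone_nat_of_succ_le
  intro n
  rcases hσ (n+1) with h | h <;> rw [ha, h] <;> push_cast <;> nlinarith [hgap n]

theorem pool_mono (hσ : ∀ j, σ j = -1 ∨ σ j = 1) (h0 : b 0 - a 0 = 2)
    (ha : ∀ j, a (j+1) = a j + (((σ (j+1) : ℝ) - 1)/2) * (b j - a j))
    (hb : ∀ j, b (j+1) = b j + (((σ (j+1) : ℝ) + 1)/2) * (b j - a j)) :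
    Monotone b := by
  have hgap : ∀ j, (0:ℝ) < b j - a j := by
    intro j; rw [pool_len σ a b h0 ha hb]; positivity
  apply monotone_nat_of_le_succ
  intro n
  rcases hσ (n+1) with h | h <;> rw [hb, h] <;> push_cast <;> nlinarith [hgap n]

theorem pool_above (h0 : b 0 - a 0 = 2)
    (ha : ∀ j, a (j+1) = a j + (((σ (j+1) : ℝ) - 1)/2) * (b j - a j))
    (hb : ∀ j, b (j+1) = b j + (((σ (j+1) : ℝ) + 1)/2) * (b j - a j))
    (hσ : ∀ j, σ j = -1 ∨ σ j = 1)
    (hp : ∀ M, ∃ j ≥ M, σ j = 1) : ∀ x : ℝ, ∃ j, x ≤ b j := by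
  have hmono := pool_mono σ a b hσ h0 ha hb
  have key : ∀ n : ℕ, ∃ j, b 0 + 2 * n ≤ b j := by
    intro n
    induction n with
    | zero => exact ⟨0, by simp⟩
    | succ m ih =>
      obtain ⟨j, hj⟩ := ih
      obtain ⟨j', hj', hσj'⟩ := hp (j+1)
      obtain ⟨m', rfl⟩ : ∃ m', j' = m' + 1 := ⟨j' - 1, by omega⟩
      refine ⟨m' + 1, ?_⟩
      rw [hb, hσj']
      have h1 : b j ≤ b m' := hmono (by omega)
      have h2 : (2:ℝ) ≤ b m' - a m' := by
        rw [pool_len σ a b h0 ha hb]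
        calc (2:ℝ) = 2^1 := by norm_num
        _ ≤ 2^(m'+1) := by apply pow_le_pow_right₀ <;> norm_num
      push_cast
      push_cast at hj
      nlinarith
  intro x
  obtain ⟨n, hn⟩ := exists_nat_ge ((x - b 0)/2)
  obtain ⟨j, hj⟩ := key n
  exact ⟨j, by nlinarith⟩

theorem pool_below (h0 : b 0 - a 0 = 2)
    (ha : ∀ j, a (j+1) = a j + (((σ (j+1) : ℝ) - 1)/2) * (b j - a j))
    (hb : ∀ j, b (j+1) = b j + (((σ (j+1) : ℝ) + 1)/2) * (b j - a j))
    (hσ : ∀ j, σ j = -1 ∨ σ j = 1)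
    (hm : ∀ M, ∃ j ≥ M, σ j = -1) : ∀ x : ℝ, ∃ j, a j ≤ x := by
  have hanti := pool_anti σ a b hσ h0 ha hb
  have key : ∀ n : ℕ, ∃ j, a j ≤ a 0 - 2 * n := by
    intro n
    induction n with
    | zero => exact ⟨0, by simp⟩
    | succ m ih =>
      obtain ⟨j, hj⟩ := ih
      obtain ⟨j', hj', hσj'⟩ := hm (j+1)
      obtain ⟨m', rfl⟩ : ∃ m', j' = m' + 1 := ⟨j' - 1, by omega⟩
      refine ⟨m' + 1, ?_⟩
      rw [ha, hσj']
      have h1 : a m' ≤ a j := hanti (by omega)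
      have h2 : (2:ℝ) ≤ b m' - a m' := by
        rw [pool_len σ a b h0 ha hb]
        calc (2:ℝ) = 2^1 := by norm_num
        _ ≤ 2^(m'+1) := by apply pow_le_pow_right₀ <;> norm_num
      push_cast
      push_cast at hj
      nlinarith
  intro x
  obtain ⟨n, hn⟩ := exists_nat_ge ((a 0 - x)/2)
  obtain ⟨j, hj⟩ := key n
  exact ⟨j, by nlinarith⟩

end aux


section aux2
variable (σ : ℕ → ℤ) (a b : ℕ → ℝ)

theorem pool_constA (hσ : ∀ j, σ j = -1 ∨ σ j = 1) (h0 : b 0 - a 0 = 2)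
    (ha : ∀ j, a (j+1) = a j + (((σ (j+1) : ℝ) - 1)/2) * (b j - a j))
    (hb : ∀ j, b (j+1) = b j + (((σ (j+1) : ℝ) + 1)/2) * (b j - a j))
    (N : ℕ) (h1 : ∀ j ≥ N, σ j = 1) :
    (∀ j, a N ≤ a j) ∧ (∀ x : ℝ, a N ≤ x → ∃ j, a j ≤ x ∧ x ≤ b j) := by
  have hanti : Antitone a := pool_anti σ a b hσ h0 ha hb
  have hmono : Monotone b := pool_mono σ a b hσ h0 ha hb
  have haeq : ∀ j ≥ N, a j = a N := by
    intro j hj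
    induction j, hj using Nat.le_induction with
    | base => rfl
    | succ m hm ih =>
      rw [ha, h1 (m+1) (by omega)]
      push_cast; rw [ih]; ring
  have hlb : ∀ j, a N ≤ a j := by
    intro j
    rcases le_total j N with h | h
    · exact hanti h
    · rw [haeq j h]
  refine ⟨hlb, ?_⟩
  intro x hx
  have hp : ∀ M, ∃ j ≥ M, σ j = 1 :=
    fun M => ⟨max M N, le_max_left _ _, h1 _ (le_max_right _ _)⟩
  obtain ⟨j1, hj1⟩ := pool_above σ a b h0 ha hb hσ hp x
  refine ⟨max N j1, ?_, le_trans hj1 (hmono (le_max_right _ _))⟩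
  rw [haeq _ (le_max_left _ _)]; exact hx

theorem pool_constB (hσ : ∀ j, σ j = -1 ∨ σ j = 1) (h0 : b 0 - a 0 = 2)
    (ha : ∀ j, a (j+1) = a j + (((σ (j+1) : ℝ) - 1)/2) * (b j - a j))
    (hb : ∀ j, b (j+1) = b j + (((σ (j+1) : ℝ) + 1)/2) * (b j - a j))
    (N : ℕ) (h1 : ∀ j ≥ N, σ j = -1) :
    (∀ j, b j ≤ b N) ∧ (∀ x : ℝ, x ≤ b N → ∃ j, a j ≤ x ∧ x ≤ b j) := by
  have hanti : Antitone a := pool_anti σ a b hσ h0 ha hb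
  have hmono : Monotone b := pool_mono σ a b hσ h0 ha hb
  have hbeq : ∀ j ≥ N, b j = b N := by
    intro j hj
    induction j, hj using Nat.le_induction with
    | base => rfl
    | succ m hm ih =>
      rw [hb, h1 (m+1) (by omega)]
      push_cast; rw [ih]; ring
  have hub : ∀ j, b j ≤ b N := by
    intro j
    rcases le_total j N with h | h
    · exact hmono h
    · rw [hbeq j h]
  refine ⟨hub, ?_⟩
  intro x hx
  have hm : ∀ M, ∃ j ≥ M, σ j = -1 :=
    fun M => ⟨max M N, le_max_left _ _, h1 _ (le_max_right _ _)⟩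
  obtain ⟨j1, hj1⟩ := pool_below σ a b h0 ha hb hσ hm x
  refine ⟨max N j1, le_trans (hanti (le_max_right _ _)) hj1, ?_⟩
  rw [hbeq _ (le_max_left _ _)]; exact hx

theorem pool_nonconst (hσ : ∀ j, σ j = -1 ∨ σ j = 1) (h0 : b 0 - a 0 = 2)
    (ha : ∀ j, a (j+1) = a j + (((σ (j+1) : ℝ) - 1)/2) * (b j - a j))
    (hb : ∀ j, b (j+1) = b j + (((σ (j+1) : ℝ) + 1)/2) * (b j - a j))
    (hne : ∀ M, ∃ j ≥ M, σ j ≠ σ M) :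
    ∀ x : ℝ, ∃ j, a j ≤ x ∧ x ≤ b j := by
  have hval : ∀ v : ℤ, (v = -1 ∨ v = 1) → ∀ M, ∃ j ≥ M, σ j = v := by
    intro v hv M
    by_cases hMv : σ M = v
    · exact ⟨M, le_refl M, hMv⟩
    · obtain ⟨j, hj, hj'⟩ := hne M
      refine ⟨j, hj, ?_⟩
      rcases hσ j with h | h <;> rcases hσ M with h' | h' <;> rcases hv with h'' | h'' <;> omega
  have hanti : Antitone a := pool_anti σ a b hσ h0 ha hb
  have hmono : Monotone b := pool_mono σ a b hσ h0 ha hb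
  intro x
  obtain ⟨j1, hj1⟩ := pool_below σ a b h0 ha hb hσ (hval (-1) (Or.inl rfl)) x
  obtain ⟨j2, hj2⟩ := pool_above σ a b h0 ha hb hσ (hval 1 (Or.inr rfl)) x
  exact ⟨max j1 j2, le_trans (hanti (le_max_left _ _)) hj1,
    le_trans hj2 (hmono (le_max_right _ _))⟩

end aux2

/-- The pool structure of a `d`-dimensional Böröczky tiling, determined coordinatewise:
if exactly `k` coordinate sequences of `σ` are eventually constant, then the union of the
boxes produced by the coordinatewise interval recursion is (up to translation and
coordinate reflections) `ℝ^{d-k} × [0,∞)^k`, i.e. it is cut out by `k` coordinate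
half-space conditions, and reflecting in the `k` bounding hyperplanes produces exactly
`2^k` pools. -/
theorem pool_structure (d k : ℕ) (σ : ℕ → Fin d → ℤ) (a b : ℕ → Fin d → ℝ)
    (hσ : ∀ j i, σ j i = -1 ∨ σ j i = 1)
    (h0 : ∀ i, b 0 i - a 0 i = 2)
    (ha : ∀ j i, a (j + 1) i = a j i + (((σ (j + 1) i : ℝ) - 1) / 2) * (b j i - a j i))
    (hb : ∀ j i, b (j + 1) i = b j i + (((σ (j + 1) i : ℝ) + 1) / 2) * (b j i - a j i))
    (hk : {i : Fin d | ∃ N, ∀ j ≥ N, σ j i = σ N i}.ncard = k)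
    (U : Set (Fin d → ℝ))
    (hU : U = ⋃ j, {x : Fin d → ℝ | ∀ i, x i ∈ Set.Icc (a j i) (b j i)}) :
    ∃ (S : Finset (Fin d)) (c : Fin d → ℝ) (η : Fin d → ℤ),
      S.card = k ∧ (∀ i, η i = -1 ∨ η i = 1) ∧
      U = {x : Fin d → ℝ | ∀ i ∈ S, 0 ≤ (η i : ℝ) * (x i - c i)} ∧
      {V : Set (Fin d → ℝ) | ∃ ε : Fin d → ℤ, (∀ i, ε i = -1 ∨ ε i = 1) ∧
        (∀ i ∉ S, ε i = 1) ∧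
        V = (fun x : Fin d → ℝ => fun i => c i + (ε i : ℝ) * (x i - c i)) '' U}.ncard
        = 2 ^ k := by
  classical
  set E : Set (Fin d) := {i : Fin d | ∃ N, ∀ j ≥ N, σ j i = σ N i} with hEdef
  have hEfin : E.Finite := Set.toFinite E
  -- choose witnesses of eventual constancy
  have hch : ∀ i : Fin d, ∃ M : ℕ, i ∈ E → ∀ j ≥ M, σ j i = σ M i := by
    intro i
    by_cases hi : i ∈ E
    · obtain ⟨M, hM⟩ := hi; exact ⟨M, fun _ => hM⟩
    · exact ⟨0, fun h => absurd h hi⟩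
  choose N hNspec using hch
  set η : Fin d → ℤ := fun i => if i ∈ E then σ (N i) i else 1 with hηdef
  set c : Fin d → ℝ := fun i => if σ (N i) i = 1 then a (N i) i else b (N i) i with hcdef
  set S : Finset (Fin d) := hEfin.toFinset with hSdef
  have hSmem : ∀ i, i ∈ S ↔ i ∈ E := fun i => hEfin.mem_toFinset
  have hScard : S.card = k := by
    rw [← hk]; exact (Set.ncard_eq_toFinset_card _ hEfin).symm
  have hη : ∀ i, η i = -1 ∨ η i = 1 := by
    intro i
    rw [hηdef]
    by_cases hi : i ∈ E
    · simp only [if_pos hi]; exact hσ (N i) i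
    · simp [if_neg hi]
  have hanti : ∀ i, Antitone (fun j => a j i) := fun i =>
    pool_anti (fun j => σ j i) _ _ (fun j => hσ j i) (h0 i) (fun j => ha j i) (fun j => hb j i)
  have hmono : ∀ i, Monotone (fun j => b j i) := fun i =>
    pool_mono (fun j => σ j i) _ _ (fun j => hσ j i) (h0 i) (fun j => ha j i) (fun j => hb j i)
  -- coordinatewise characterization
  have hIcc : ∀ i ∈ E, ∀ x : ℝ,
      (∃ j, a j i ≤ x ∧ x ≤ b j i) ↔ 0 ≤ (η i : ℝ) * (x - c i) := by
    intro i hi x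
    have hNs : ∀ j ≥ N i, σ j i = σ (N i) i := hNspec i hi
    rcases hσ (N i) i with hs | hs
    · -- eventually -1
      have hηi : η i = -1 := by rw [hηdef]; simp only [if_pos hi]; exact hs
      have hci : c i = b (N i) i := by
        rw [hcdef]; simp only [hs]; norm_num
      obtain ⟨hub, hexist⟩ := pool_constB (fun j => σ j i) (fun j => a j i) (fun j => b j i)
        (fun j => hσ j i) (h0 i) (fun j => ha j i) (fun j => hb j i) (N i)
        (fun j hj => (hNs j hj).trans hs)
      constructor
      · rintro ⟨j, hj1, hj2⟩
        rw [hηi, hci]; push_cast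
        nlinarith [hub j]
      · intro hx
        rw [hηi, hci] at hx; push_cast at hx
        exact hexist x (by linarith)
    · -- eventually 1
      have hηi : η i = 1 := by rw [hηdef]; simp only [if_pos hi]; exact hs
      have hci : c i = a (N i) i := by rw [hcdef]; simp only [if_pos hs]
      obtain ⟨hlb, hexist⟩ := pool_constA (fun j => σ j i) (fun j => a j i) (fun j => b j i)
        (fun j => hσ j i) (h0 i) (fun j => ha j i) (fun j => hb j i) (N i)
        (fun j hj => (hNs j hj).trans hs)
      constructor
      · rintro ⟨j, hj1, hj2⟩
        rw [hηi, hci]; push_cast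
        nlinarith [hlb j]
      · intro hx
        rw [hηi, hci] at hx; push_cast at hx
        exact hexist x (by linarith)
  have hIccFull : ∀ i ∉ E, ∀ x : ℝ, ∃ j, a j i ≤ x ∧ x ≤ b j i := by
    intro i hi x
    have hne : ∀ M, ∃ j ≥ M, σ j i ≠ σ M i := by
      intro M
      by_contra h
      push_neg at h
      exact hi ⟨M, fun j hj => h j hj⟩
    exact pool_nonconst (fun j => σ j i) (fun j => a j i) (fun j => b j i)
      (fun j => hσ j i) (h0 i) (fun j => ha j i) (fun j => hb j i) hne x
  -- the main equality
  have hUeq : U = {x : Fin d → ℝ | ∀ i ∈ S, 0 ≤ (η i : ℝ) * (x i - c i)} := by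
    rw [hU]
    ext x
    simp only [Set.mem_iUnion, Set.mem_setOf_eq, Set.mem_Icc]
    constructor
    · rintro ⟨j, hj⟩ i hiS
      exact (hIcc i ((hSmem i).mp hiS) (x i)).mp ⟨j, hj i⟩
    · intro hx
      have hex : ∀ i : Fin d, ∃ j, a j i ≤ x i ∧ x i ≤ b j i := by
        intro i
        by_cases hi : i ∈ E
        · exact (hIcc i hi (x i)).mpr (hx i ((hSmem i).mpr hi))
        · exact hIccFull i hi (x i)
      choose f hf using hex
      refine ⟨Finset.univ.sup f, fun i => ?_⟩
      have hfi : f i ≤ Finset.univ.sup f := Finset.le_sup (Finset.mem_univ i)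
      exact ⟨le_trans (hanti i hfi) (hf i).1, le_trans (hf i).2 (hmono i hfi)⟩
  -- the image of U under a reflection
  have himg : ∀ ε : Fin d → ℤ, (∀ i, ε i = -1 ∨ ε i = 1) →
      (fun x : Fin d → ℝ => fun i => c i + (ε i : ℝ) * (x i - c i)) '' U
        = {x : Fin d → ℝ | ∀ i ∈ S, 0 ≤ ((ε i * η i : ℤ) : ℝ) * (x i - c i)} := by
    intro ε hε
    have hsq : ∀ i, (ε i : ℝ) * (ε i : ℝ) = 1 := by
      intro i; rcases hε i with h | h <;> rw [h] <;> norm_num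
    rw [hUeq]
    ext x
    simp only [Set.mem_image, Set.mem_setOf_eq]
    constructor
    · rintro ⟨y, hy, rfl⟩ i hiS
      have h1 := hy i hiS
      have h2 : ((ε i * η i : ℤ) : ℝ) * ((c i + (ε i : ℝ) * (y i - c i)) - c i)
          = (η i : ℝ) * (y i - c i) := by
        push_cast
        linear_combination ((η i : ℤ) : ℝ) * (y i - c i) * (hsq i)
      rw [h2]; exact h1
    · intro hx
      refine ⟨fun i => c i + (ε i : ℝ) * (x i - c i), ?_, ?_⟩
      · intro i hiS
        have h1 := hx i hiS
        have h2 : (η i : ℝ) * ((c i + (ε i : ℝ) * (x i - c i)) - c i)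
            = ((ε i * η i : ℤ) : ℝ) * (x i - c i) := by push_cast; ring
        rw [h2]; exact h1
      · funext i
        simp only
        linear_combination (x i - c i) * (hsq i)
  -- count the pools
  refine ⟨S, c, η, hScard, hη, hUeq, ?_⟩
  set g : Finset (Fin d) → Set (Fin d → ℝ) := fun T =>
    {x : Fin d → ℝ | ∀ i ∈ S, 0 ≤ (((if i ∈ T then -1 else 1) * η i : ℤ) : ℝ) * (x i - c i)}
    with hgdef
  have hPeq : {V : Set (Fin d → ℝ) | ∃ ε : Fin d → ℤ, (∀ i, ε i = -1 ∨ ε i = 1) ∧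
        (∀ i ∉ S, ε i = 1) ∧
        V = (fun x : Fin d → ℝ => fun i => c i + (ε i : ℝ) * (x i - c i)) '' U}
      = g '' ↑S.powerset := by
    ext V
    simp only [Set.mem_setOf_eq, Set.mem_image, Finset.coe_powerset, Set.mem_preimage,
      Set.mem_powerset_iff, Finset.coe_subset]
    constructor
    · rintro ⟨ε, hε, hεS, rfl⟩
      refine ⟨S.filter (fun i => ε i = -1), Finset.filter_subset _ _, ?_⟩
      rw [himg ε hε, hgdef]
      have hsgn : ∀ i ∈ S, ((if i ∈ S.filter (fun i => ε i = -1) then -1 else 1 : ℤ)) = ε i := by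
        intro i hiS
        by_cases h : ε i = -1
        · simp [Finset.mem_filter, hiS, h]
        · have h1 : ε i = 1 := (hε i).resolve_left h
          simp [Finset.mem_filter, h, h1]
      exact Set.ext fun x => forall₂_congr fun i hiS => by rw [hsgn i hiS]
    · rintro ⟨T, hTS, rfl⟩
      have hεpm : ∀ i : Fin d,
          (if i ∈ T then (-1:ℤ) else 1) = -1 ∨ (if i ∈ T then (-1:ℤ) else 1) = 1 := by
        intro i; by_cases h : i ∈ T <;> simp [h]
      refine ⟨fun i => if i ∈ T then -1 else 1, fun i => hεpm i, ?_, ?_⟩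
      · intro i hiS
        have hiT : i ∉ T := fun hiT => hiS (hTS hiT)
        simp [hiT]
      · rw [himg _ hεpm]
  rw [hPeq]
  have hsub : ∀ T T' : Finset (Fin d), T ⊆ S → T' ⊆ S → g T = g T' → T ⊆ T' := by
    intro T T' hTS hT'S hgg i hiT
    by_contra hiT'
    have hiS : i ∈ S := hTS hiT
    set s : Fin d → ℤ := fun j => (if j ∈ T then -1 else 1) * η j with hsdef
    have hs : ∀ j, s j = -1 ∨ s j = 1 := by
      intro j
      rw [hsdef]
      rcases hη j with h | h <;> by_cases h' : j ∈ T <;> simp [h, h']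
    have hxmem : (fun j => c j + ((s j : ℤ) : ℝ)) ∈ g T := by
      rw [hgdef]
      intro j hjS
      have : (((if j ∈ T then -1 else 1) * η j : ℤ) : ℝ) * ((c j + ((s j : ℤ) : ℝ)) - c j)
          = (s j : ℝ) * (s j : ℝ) := by rw [hsdef]; push_cast; ring
      rw [this]
      rcases hs j with h | h <;> rw [h] <;> norm_num
    rw [hgg, hgdef] at hxmem
    have hbad := hxmem i hiS
    have heval : (((if i ∈ T' then -1 else 1) * η i : ℤ) : ℝ) * ((c i + ((s i : ℤ) : ℝ)) - c i)
        = -((s i : ℝ) * (s i : ℝ)) := by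
      rw [if_neg hiT', hsdef]
      simp only [if_pos hiT]
      push_cast; ring
    rw [heval] at hbad
    rcases hs i with h | h <;> rw [h] at hbad <;> norm_num at hbad
  have hinj : Set.InjOn g ↑S.powerset := by
    intro T hT T' hT' hgg
    simp only [Finset.coe_powerset, Set.mem_preimage, Set.mem_powerset_iff,
      Finset.coe_subset] at hT hT'
    exact le_antisymm (hsub T T' hT hT' hgg) (hsub T' T hT' hT hgg.symm)
  rw [Set.ncard_image_of_injOn hinj, Set.ncard_coe_finset, Finset.card_powerset, hScard]
end

section
/- Suppose s, s' : ℕ → {-1,1} and for each choice of sign ε ∈ {-1,1} there exist m ≠ n with s(m+j) = ε·s'(n+j) for all j, where also s(j) = ε'·s'(j) for all j for some sign ε'. Then s is eventually periodic. -/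
/-- If a sequence `s` agrees (up to a global sign) with a nontrivial shift of a sequence
`s'`, and agrees with `s'` itself up to a global sign, then `s` is eventually periodic. -/
theorem eventually_periodic_of_sign_shift (s s' : ℕ → ℤ)
    (hs : ∀ j, s j = -1 ∨ s j = 1) (hs' : ∀ j, s' j = -1 ∨ s' j = 1)
    (hshift : ∃ (ε : ℤ) (m n : ℕ), (ε = -1 ∨ ε = 1) ∧ m ≠ n ∧
      ∀ j, s (m + j) = ε * s' (n + j))
    (hsame : ∃ ε' : ℤ, (ε' = -1 ∨ ε' = 1) ∧ ∀ j, s j = ε' * s' j) :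
    ∃ N k : ℕ, 1 ≤ k ∧ ∀ j ≥ N, s (j + k) = s j := by
  obtain ⟨ε, m, n, hε, hmn, hsh⟩ := hshift
  obtain ⟨ε', hε', hsa⟩ := hsame
  have hε2 : ε * ε = 1 := by rcases hε with h | h <;> simp [h]
  have hε'2 : ε' * ε' = 1 := by rcases hε' with h | h <;> simp [h]
  set δ := ε * ε' with hδ
  have hδ2 : δ * δ = 1 := by
    rcases hε with h | h <;> rcases hε' with h' | h' <;> simp [hδ, h, h']
  have hs'eq : ∀ x, s' x = ε' * s x := by
    intro x
    have := hsa x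
    rw [this]
    rw [← mul_assoc, hε'2, one_mul]
  -- key: ∃ N k, 1 ≤ k ∧ ∀ j ≥ N, s (j + k) = δ * s j
  have key : ∃ N k : ℕ, 1 ≤ k ∧ ∀ j ≥ N, s (j + k) = δ * s j := by
    rcases lt_or_gt_of_ne hmn with h | h
    · -- m < n, k = n - m, N = m
      refine ⟨m, n - m, by omega, fun j hj => ?_⟩
      have h1 := hsh (j - m)
      have hm : m + (j - m) = j := by omega
      have hn : n + (j - m) = j + (n - m) := by omega
      rw [hm, hn, hs'eq] at h1
      have h2 : s j = δ * s (j + (n - m)) := by rw [h1, ← mul_assoc]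
      rw [h2, ← mul_assoc, hδ2, one_mul]
    · -- m > n, k = m - n, N = n
      refine ⟨n, m - n, by omega, fun j hj => ?_⟩
      have h1 := hsh (j - n)
      have hm : m + (j - n) = j + (m - n) := by omega
      have hn : n + (j - n) = j := by omega
      rw [hm, hn, hs'eq] at h1
      rw [h1, ← mul_assoc]
  obtain ⟨N, k, hk, hper⟩ := key
  rcases (show δ = -1 ∨ δ = 1 by
      rcases hε with h | h <;> rcases hε' with h' | h' <;> simp [hδ, h, h']) with h | h
  · refine ⟨N, 2 * k, by omega, fun j hj => ?_⟩
    have h1 := hper (j + k) (by omega)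
    have h2 := hper j hj
    have : j + k + k = j + 2 * k := by ring
    rw [this] at h1
    rw [h1, h2, ← mul_assoc, hδ2, one_mul]
  · exact ⟨N, k, hk, fun j hj => by rw [hper j hj, h, one_mul]⟩
end
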